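/- arXiv:1705.07437 — 10 statements merged into one kernel-verified Lean document; each statement's English description precedes it below -/
import Mathlib

section
/- Let S ⊆ 𝔽₂ⁿ and let e be a coloop of S. If the contraction S/e is powerful, then S is powerful. -/
/-- A finite set `S` of vectors in `𝔽₂ⁿ` is *powerful* if for every subset `X` of the
coordinate positions, the number of vectors in `S` that are zero at every position in `X`
is a power of 2. -/
def IsPowerful {n : ℕ} (S : Finset (Fin n → ZMod 2)) : Prop :=
  ∀ X : Finset (Fin n), ∃ d : ℕ, (S.filter (fun v => ∀ i ∈ X, v i = 0)).card = 2 ^ d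

/-- The contraction `S/e`: take the vectors of `S` that are `0` at position `e` and delete
the coordinate `e` from each of them. -/
def contract {n : ℕ} (S : Finset (Fin (n + 1) → ZMod 2)) (e : Fin (n + 1)) :
    Finset (Fin n → ZMod 2) :=
  (S.filter (fun v => v e = 0)).image (fun v => v ∘ e.succAbove)

/-- A position `e` is a *coloop* of `S` if for every `v ∈ S`, the vector obtained from `v`
by flipping its entry at position `e` also belongs to `S`. -/
def IsColoop {n : ℕ} (S : Finset (Fin n → ZMod 2)) (e : Fin n) : Prop :=
  ∀ v ∈ S, Function.update v e (v e + 1) ∈ S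

/-- If `e` is a coloop of `S` and `S/e` is powerful, then `S` is powerful. -/
theorem powerful_of_coloop_contract_powerful {n : ℕ} (S : Finset (Fin (n + 1) → ZMod 2))
    (e : Fin (n + 1)) (he : IsColoop S e) (h : IsPowerful (contract S e)) :
    IsPowerful S := by
  classical
  intro X
  set X' : Finset (Fin n) := X.preimage e.succAbove (Fin.succAbove_right_injective.injOn)
    with hX'def
  have hmemX' : ∀ j, j ∈ X' ↔ e.succAbove j ∈ X := fun j => Finset.mem_preimage
  obtain ⟨d, hd⟩ := h X'
  have key : (S.filter (fun v => v e = 0 ∧ ∀ i ∈ X, v i = 0)).card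
      = ((contract S e).filter (fun w => ∀ j ∈ X', w j = 0)).card := by
    apply Finset.card_bij (fun v _ => v ∘ e.succAbove)
    · intro v hv
      simp only [Finset.mem_filter] at hv ⊢
      obtain ⟨hvS, hv0, hvX⟩ := hv
      refine ⟨Finset.mem_image.2 ⟨v, Finset.mem_filter.2 ⟨hvS, hv0⟩, rfl⟩, ?_⟩
      intro j hj
      exact hvX _ ((hmemX' j).1 hj)
    · intro v hv w hw hvw
      simp only [Finset.mem_filter] at hv hw
      funext i
      rcases eq_or_ne i e with rfl | hne
      · rw [hv.2.1, hw.2.1]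
      · obtain ⟨j, rfl⟩ := Fin.exists_succAbove_eq hne
        exact congrFun hvw j
    · intro w hw
      simp only [Finset.mem_filter, contract, Finset.mem_image] at hw
      obtain ⟨⟨v, hv, rfl⟩, hwX⟩ := hw
      refine ⟨v, Finset.mem_filter.2 ⟨hv.1, hv.2, ?_⟩, rfl⟩
      intro i hi
      rcases eq_or_ne i e with rfl | hne
      · exact hv.2
      · obtain ⟨j, rfl⟩ := Fin.exists_succAbove_eq hne
        exact hwX j ((hmemX' j).2 hi)
  by_cases heX : e ∈ X
  · refine ⟨d, ?_⟩
    rw [← hd, ← key]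
    congr 1
    apply Finset.filter_congr
    intro v _
    constructor
    · intro hvX; exact ⟨hvX e heX, hvX⟩
    · exact fun h => h.2
  · refine ⟨d + 1, ?_⟩
    have hone : ∀ x : ZMod 2, ¬ x = 0 ↔ x = 1 := by decide
    have hsplit : (S.filter (fun v => ∀ i ∈ X, v i = 0)).card
        = (S.filter (fun v => v e = 0 ∧ ∀ i ∈ X, v i = 0)).card
          + (S.filter (fun v => v e = 1 ∧ ∀ i ∈ X, v i = 0)).card := by
      rw [← Finset.card_filter_add_card_filter_not
        (s := S.filter (fun v => ∀ i ∈ X, v i = 0)) (p := fun v => v e = 0)]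
      congr 1
      · rw [Finset.filter_filter]
        congr 1
        ext v
        simp only [Finset.mem_filter]
        tauto
      · rw [Finset.filter_filter]
        congr 1
        ext v
        simp only [Finset.mem_filter, hone]
        tauto
    have hbij : (S.filter (fun v => v e = 1 ∧ ∀ i ∈ X, v i = 0)).card
        = (S.filter (fun v => v e = 0 ∧ ∀ i ∈ X, v i = 0)).card := by
      apply Finset.card_bij (fun v _ => Function.update v e (v e + 1))
      · intro v hv
        simp only [Finset.mem_filter] at hv ⊢
        obtain ⟨hvS, hv1, hvX⟩ := hv
        refine ⟨he v hvS, ?_, ?_⟩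
        · rw [Function.update_self, hv1]; decide
        · intro i hi
          have hne : i ≠ e := fun hieq => heX (hieq ▸ hi)
          rw [Function.update_of_ne hne]
          exact hvX i hi
      · intro v hv w hw hvw
        simp only [Finset.mem_filter] at hv hw
        funext i
        rcases eq_or_ne i e with rfl | hne
        · rw [hv.2.1, hw.2.1]
        · have := congrFun hvw i
          rwa [Function.update_of_ne hne, Function.update_of_ne hne] at this
      · intro w hw
        simp only [Finset.mem_filter] at hw
        obtain ⟨hwS, hw0, hwX⟩ := hw
        refine ⟨Function.update w e (w e + 1), ?_, ?_⟩
        · refine Finset.mem_filter.2 ⟨he w hwS, ?_, ?_⟩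
          · rw [Function.update_self, hw0]; decide
          · intro i hi
            have hne : i ≠ e := fun hieq => heX (hieq ▸ hi)
            rw [Function.update_of_ne hne]
            exact hwX i hi
        · funext i
          rcases eq_or_ne i e with rfl | hne
          · rw [Function.update_self, Function.update_self, hw0]; decide
          · rw [Function.update_of_ne hne, Function.update_of_ne hne]

    rw [hsplit, hbij, key, hd]
    ring
end

section
/- Let S ⊆ 𝔽₂ⁿ and let e be a coloop of S. If the contraction S/e is a linear subspace of 𝔽₂^{n-1}, then S is a linear subspace of 𝔽₂ⁿ. -/
/-- A set `S ⊆ 𝔽₂ⁿ` is *linear* if it is the underlying set of a linear subspace over `𝔽₂`. -/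
def IsLinear {n : ℕ} (S : Finset (Fin n → ZMod 2)) : Prop :=
  ∃ W : Submodule (ZMod 2) (Fin n → ZMod 2), (S : Set (Fin n → ZMod 2)) = W

/-- If `e` is a coloop of `S` and `S/e` is linear, then `S` is linear. -/
theorem linear_of_coloop_contract_linear {n : ℕ} (S : Finset (Fin (n + 1) → ZMod 2))
    (e : Fin (n + 1)) (he : IsColoop S e) (h : IsLinear (contract S e)) :
    IsLinear S := by
  obtain ⟨W, hW⟩ := h
  refine ⟨W.comap (LinearMap.funLeft (ZMod 2) (ZMod 2) e.succAbove), ?_⟩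
  ext v
  simp only [Finset.mem_coe, SetLike.mem_coe, Submodule.mem_comap,
    LinearMap.funLeft_apply]
  have hmem : ∀ u : Fin (n + 1) → ZMod 2,
      ((u ∘ e.succAbove) ∈ W ↔ u ∘ e.succAbove ∈ contract S e) := by
    intro u
    rw [← SetLike.mem_coe, ← hW, Finset.mem_coe]
  show v ∈ S ↔ v ∘ e.succAbove ∈ W
  rw [hmem v]
  constructor
  · intro hv
    by_cases h0 : v e = 0
    · exact Finset.mem_image_of_mem _ (Finset.mem_filter.2 ⟨hv, h0⟩)
    · have h1 : v e = 1 := by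
        have h2 : ∀ a : ZMod 2, a = 0 ∨ a = 1 := by decide
        exact (h2 (v e)).resolve_left h0
      have hv' := he v hv
      refine Finset.mem_image.2 ⟨Function.update v e (v e + 1), Finset.mem_filter.2 ⟨hv', ?_⟩, ?_⟩
      · simp [h1]; rfl
      · funext i
        simp [Function.update_of_ne (Fin.succAbove_ne e i)]
  · intro hv
    obtain ⟨w, hw, hwe⟩ := Finset.mem_image.1 hv
    obtain ⟨hwS, hw0⟩ := Finset.mem_filter.1 hw
    have hagree : ∀ j, j ≠ e → w j = v j := by
      intro j hj
      obtain ⟨i, rfl⟩ := Fin.exists_succAbove_eq hj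
      exact congrFun hwe i
    by_cases h0 : v e = 0
    · have : w = v := by
        funext j
        by_cases hje : j = e
        · rw [hje, hw0, h0]
        · exact hagree j hje
      rwa [← this]
    · have h1 : v e = 1 := by
        have h2 : ∀ a : ZMod 2, a = 0 ∨ a = 1 := by decide
        exact (h2 (v e)).resolve_left h0
      have : Function.update w e (w e + 1) = v := by
        funext j
        by_cases hje : j = e
        · subst hje; simp [hw0, h1]
        · rw [Function.update_of_ne hje]; exact hagree j hje
      rw [← this]
      exact he w hwS
end

section
/- Let S ⊆ 𝔽₂ⁿ be a powerful set and let v ∈ S be a nonzero vector. Then the near-frame extension S+□∖v ⊆ 𝔽₂^{n+1} is powerful. -/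
/-- The near-frame extension `S+□∖v ⊆ 𝔽₂^{n+1}`: the zero vector and `v` are each extended
by a new last coordinate `0`, and every other vector of `S` is extended by a new last
coordinate `1`. -/
def nearFrame {n : ℕ} (S : Finset (Fin n → ZMod 2)) (v : Fin n → ZMod 2) :
    Finset (Fin (n + 1) → ZMod 2) :=
  S.image (fun w => if w = 0 ∨ w = v then Fin.snoc w 0 else Fin.snoc w 1)

lemma zero_mem_of_powerful {n : ℕ} {S : Finset (Fin n → ZMod 2)}
    (hS : IsPowerful S) : (0 : Fin n → ZMod 2) ∈ S := by
  obtain ⟨d, hd⟩ := hS Finset.univ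
  have hpos : 0 < (S.filter (fun v => ∀ i ∈ Finset.univ, v i = 0)).card := by
    rw [hd]; exact Nat.pow_pos (n := d) (by norm_num)
  obtain ⟨w, hw⟩ := Finset.card_pos.mp hpos
  rw [Finset.mem_filter] at hw
  have : w = 0 := funext fun i => hw.2 i (Finset.mem_univ i)
  exact this ▸ hw.1

/-- If `S` is powerful and `v ∈ S` is nonzero, then the near-frame extension `S+□∖v`
is powerful. -/
theorem nearFrame_powerful {n : ℕ} (S : Finset (Fin n → ZMod 2)) (v : Fin n → ZMod 2)
    (hv : v ∈ S) (hv0 : v ≠ 0) (hS : IsPowerful S) : IsPowerful (nearFrame S v) := by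
  have h0 : (0 : Fin n → ZMod 2) ∈ S := zero_mem_of_powerful hS
  intro X
  set f : (Fin n → ZMod 2) → (Fin (n + 1) → ZMod 2) :=
    fun w => if w = 0 ∨ w = v then Fin.snoc w 0 else Fin.snoc w 1 with hf
  have hfinit : ∀ w, Fin.init (f w) = w := by
    intro w
    simp only [hf]
    split_ifs <;> simp [Fin.init_snoc]
  have hinj : Set.InjOn f S := fun a _ b _ hab => by
    rw [← hfinit a, ← hfinit b, hab]
  set X' : Finset (Fin n) := Finset.univ.filter (fun i => Fin.castSucc i ∈ X) with hX'
  have hcard : ((nearFrame S v).filter (fun u => ∀ i ∈ X, u i = 0)).card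
      = (S.filter (fun w => ∀ i ∈ X, f w i = 0)).card := by
    rw [nearFrame, ← hf, Finset.filter_image]
    exact Finset.card_image_of_injOn
      (hinj.mono (Finset.coe_subset.mpr (Finset.filter_subset _ _)))
  by_cases hlast : Fin.last n ∈ X
  · have key : S.filter (fun w => ∀ j ∈ X, f w j = 0)
        = S.filter (fun w => (w = 0 ∨ w = v) ∧ ∀ i ∈ X', w i = 0) := by
      apply Finset.filter_congr
      intro w hw
      simp only [hf]
      constructor
      · intro h
        have hb := h _ hlast
        by_cases hwv : w = 0 ∨ w = v
        · refine ⟨hwv, fun i hi => ?_⟩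
          have := h _ ((Finset.mem_filter.mp hi).2)
          rwa [if_pos hwv, Fin.snoc_castSucc] at this
        · rw [if_neg hwv, Fin.snoc_last] at hb
          exact absurd hb one_ne_zero
      · rintro ⟨hwv, h⟩ j hj
        rw [if_pos hwv]
        by_cases hj' : j = Fin.last n
        · rw [hj', Fin.snoc_last]
        · have : Fin.castSucc (j.castPred hj') = j := Fin.castSucc_castPred _ _
          rw [← this, Fin.snoc_castSucc]
          exact h _ (Finset.mem_filter.mpr ⟨Finset.mem_univ _, by rw [this]; exact hj⟩)
    by_cases hvX : ∀ i ∈ X', v i = 0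
    · refine ⟨1, ?_⟩
      rw [hcard, key]
      have : S.filter (fun w => (w = 0 ∨ w = v) ∧ ∀ i ∈ X', w i = 0) = {0, v} := by
        ext w
        simp only [Finset.mem_filter, Finset.mem_insert, Finset.mem_singleton]
        constructor
        · rintro ⟨_, hwv, _⟩; exact hwv
        · rintro (rfl | rfl)
          · exact ⟨h0, Or.inl rfl, fun i _ => rfl⟩
          · exact ⟨hv, Or.inr rfl, hvX⟩
      rw [this, Finset.card_pair (Ne.symm hv0)]; norm_num
    · refine ⟨0, ?_⟩
      rw [hcard, key]
      have : S.filter (fun w => (w = 0 ∨ w = v) ∧ ∀ i ∈ X', w i = 0) = {0} := by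
        ext w
        simp only [Finset.mem_filter, Finset.mem_singleton]
        constructor
        · rintro ⟨_, (rfl | rfl), h⟩
          · rfl
          · exact absurd h hvX
        · rintro rfl
          exact ⟨h0, Or.inl rfl, fun i _ => rfl⟩
      rw [this, Finset.card_singleton, pow_zero]
  · obtain ⟨d, hd⟩ := hS X'
    refine ⟨d, ?_⟩
    rw [hcard, ← hd]
    apply congrArg
    apply Finset.filter_congr
    intro w hw
    simp only [hf]
    constructor
    · intro h i hi
      have := h _ ((Finset.mem_filter.mp hi).2)
      split_ifs at this <;> rwa [Fin.snoc_castSucc] at this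
    · intro h j hj
      have hj' : j ≠ Fin.last n := fun he => hlast (he ▸ hj)
      have hc : Fin.castSucc (j.castPred hj') = j := Fin.castSucc_castPred _ _
      have := h _ (Finset.mem_filter.mpr ⟨Finset.mem_univ _, hc ▸ hj⟩)
      rw [← hc]
      split_ifs <;> rwa [Fin.snoc_castSucc]
end

section
/- Let T ⊆ 𝔽₂ⁿ. Then T is powerful if and only if the star extension T+⋆ ⊆ 𝔽₂^{n+1} is powerful. -/
/-- The star extension `T+⋆ ⊆ 𝔽₂^{n+1}`: each vector of `T` extended by a new last
coordinate `0`, together with each vector not in `T` extended by a new last coordinate `1`. -/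
def starExt {n : ℕ} (T : Finset (Fin n → ZMod 2)) : Finset (Fin (n + 1) → ZMod 2) :=
  T.image (fun v => Fin.snoc v 0) ∪ Tᶜ.image (fun v => Fin.snoc v 1)

lemma snoc_inj {n : ℕ} (c : ZMod 2) :
    Function.Injective (fun v : Fin n → ZMod 2 => (Fin.snoc v c : Fin (n+1) → ZMod 2)) := by
  intro u v h
  funext j
  have := congrFun h j.castSucc
  simpa using this

lemma zero_on_snoc {n : ℕ} (X : Finset (Fin (n+1))) (v : Fin n → ZMod 2) (c : ZMod 2) :
    (∀ i ∈ X, (Fin.snoc v c : Fin (n+1) → ZMod 2) i = 0) ↔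
      ((Fin.last n ∈ X → c = 0) ∧ ∀ j : Fin n, j.castSucc ∈ X → v j = 0) := by
  constructor
  · intro h
    refine ⟨fun hl => ?_, fun j hj => ?_⟩
    · simpa using h _ hl
    · simpa using h _ hj
  · rintro ⟨h1, h2⟩ i hi
    induction i using Fin.lastCases with
    | last => simpa using h1 hi
    | cast j => simpa using h2 j hi

lemma card_univ_zero {n : ℕ} (X : Finset (Fin n)) :
    ∃ d, ((Finset.univ : Finset (Fin n → ZMod 2)).filter (fun v => ∀ i ∈ X, v i = 0)).card
      = 2 ^ d := by
  refine ⟨Fintype.card {i : Fin n // i ∉ X}, ?_⟩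
  rw [← Fintype.card_subtype]
  have e : {v : Fin n → ZMod 2 // ∀ i ∈ X, v i = 0} ≃ ({i : Fin n // i ∉ X} → ZMod 2) :=
    { toFun := fun v i => v.1 i.1
      invFun := fun f => ⟨fun i => if h : i ∈ X then 0 else f ⟨i, h⟩, fun i hi => dif_pos hi⟩
      left_inv := fun v => Subtype.ext (funext fun i => by
        by_cases h : i ∈ X
        · simp [h, v.2 i h]
        · simp [h])
      right_inv := fun f => funext fun i => by simp [i.2] }
  rw [Fintype.card_congr e, Fintype.card_fun]
  simp

lemma star_filter_card {n : ℕ} (T : Finset (Fin n → ZMod 2)) (X : Finset (Fin (n+1))) :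
    ((starExt T).filter (fun w => ∀ i ∈ X, w i = 0)).card =
      (T.filter (fun v => ∀ j : Fin n, j.castSucc ∈ X → v j = 0)).card +
      (if Fin.last n ∈ X then 0
       else (Tᶜ.filter (fun v => ∀ j : Fin n, j.castSucc ∈ X → v j = 0)).card) := by
  unfold starExt
  rw [Finset.filter_union, Finset.card_union_of_disjoint]
  · congr 1
    · rw [Finset.filter_image, Finset.card_image_of_injective _ (snoc_inj 0)]
      congr 1
      ext v
      simp [zero_on_snoc]
    · rw [Finset.filter_image, Finset.card_image_of_injective _ (snoc_inj 1)]
      by_cases hl : Fin.last n ∈ X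
      · simp only [if_pos hl]
        rw [Finset.card_eq_zero, Finset.filter_eq_empty_iff]
        intro v _
        simp only [zero_on_snoc]
        intro h
        exact one_ne_zero (h.1 hl)
      · simp only [if_neg hl]
        congr 1
        ext v
        simp [zero_on_snoc, hl]
  · rw [Finset.disjoint_left]
    intro w hw hw'
    simp only [Finset.mem_filter, Finset.mem_image] at hw hw'
    obtain ⟨⟨u, _, hu⟩, _⟩ := hw
    obtain ⟨⟨v, _, hv⟩, _⟩ := hw'
    have h0 := congrFun hu (Fin.last n)
    have h1 := congrFun hv (Fin.last n)
    simp only [Fin.snoc_last] at h0 h1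
    rw [← h0] at h1
    exact one_ne_zero h1

/-- `T` is powerful if and only if the star extension `T+⋆` is powerful. -/
theorem powerful_iff_starExt_powerful {n : ℕ} (T : Finset (Fin n → ZMod 2)) :
    IsPowerful T ↔ IsPowerful (starExt T) := by
  constructor
  · intro hT X
    rw [star_filter_card]
    by_cases hl : Fin.last n ∈ X
    · rw [if_pos hl, add_zero]
      obtain ⟨d, hd⟩ := hT (X.preimage Fin.castSucc (Fin.castSucc_injective n).injOn)
      refine ⟨d, ?_⟩
      rw [← hd]
      congr 1
      ext v
      simp [Finset.mem_preimage]
    · rw [if_neg hl]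
      have key : (T.filter (fun v => ∀ j : Fin n, j.castSucc ∈ X → v j = 0)).card +
          (Tᶜ.filter (fun v => ∀ j : Fin n, j.castSucc ∈ X → v j = 0)).card =
          ((Finset.univ : Finset (Fin n → ZMod 2)).filter
            (fun v => ∀ i ∈ (X.preimage Fin.castSucc
              (Fin.castSucc_injective n).injOn), v i = 0)).card := by
        rw [← Finset.card_union_of_disjoint
          (Finset.disjoint_filter_filter (disjoint_compl_right)),
          ← Finset.filter_union, Finset.union_compl]
        congr 1
        ext v
        simp [Finset.mem_preimage]
      rw [key]
      exact card_univ_zero _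
  · intro hS X
    obtain ⟨d, hd⟩ := hS (X.image Fin.castSucc ∪ {Fin.last n})
    refine ⟨d, ?_⟩
    rw [star_filter_card] at hd
    have hl : Fin.last n ∈ X.image Fin.castSucc ∪ {Fin.last n} := by simp
    rw [if_pos hl, add_zero] at hd
    rw [← hd]
    congr 1
    ext v
    simp only [Finset.mem_filter, and_congr_right_iff]
    intro _
    constructor
    · intro h j hj
      simp only [Finset.mem_union, Finset.mem_image, Finset.mem_singleton] at hj
      rcases hj with ⟨k, hk, hkj⟩ | hj
      · exact (Fin.castSucc_injective n hkj) ▸ h k hk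
      · exact absurd hj (Fin.castSucc_lt_last j).ne
    · intro h j hj
      exact h j (Finset.mem_union.mpr (Or.inl (Finset.mem_image.mpr ⟨j, hj, rfl⟩)))
end

section
/- Let S ⊆ 𝔽₂ⁿ and let e be a coordinate position. Then S is powerful if and only if the parallel extension S^∥e ⊆ 𝔽₂^{n+1} is powerful. -/
/-- The parallel extension `S^∥e ⊆ 𝔽₂^{n+1}`: append to each vector `v ∈ S` a new last
coordinate equal to `v e` (duplicating the coordinate `e`). -/
def parallelExt {n : ℕ} (S : Finset (Fin n → ZMod 2)) (e : Fin n) :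
    Finset (Fin (n + 1) → ZMod 2) :=
  S.image (fun v => Fin.snoc v (v e))

lemma snoc_injective {n : ℕ} (e : Fin n) :
    Function.Injective (fun v : Fin n → ZMod 2 => (Fin.snoc v (v e) : Fin (n+1) → ZMod 2)) := by
  intro a b h
  have := congrArg Fin.init h
  simpa [Fin.init_snoc] using this

/-- `S` is powerful if and only if the parallel extension `S^∥e` is powerful. -/
theorem powerful_iff_parallelExt_powerful {n : ℕ} (S : Finset (Fin n → ZMod 2)) (e : Fin n) :
    IsPowerful S ↔ IsPowerful (parallelExt S e) := by
  constructor
  · intro hS X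
    set X' : Finset (Fin n) :=
      (Finset.univ.filter fun j => j.castSucc ∈ X) ∪
        (if Fin.last n ∈ X then {e} else ∅) with hX'
    obtain ⟨d, hd⟩ := hS X'
    refine ⟨d, ?_⟩
    rw [parallelExt, Finset.filter_image,
      Finset.card_image_of_injective _ (snoc_injective e), ← hd]
    congr 1
    apply Finset.filter_congr
    intro v _
    constructor
    · intro h j hj
      simp only [hX', Finset.mem_union, Finset.mem_filter, Finset.mem_univ, true_and] at hj
      rcases hj with hj | hj
      · have := h _ hj
        simpa [Fin.snoc_castSucc] using this
      · by_cases hl : Fin.last n ∈ X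
        · simp [hl] at hj
          subst hj
          have := h _ hl
          simpa [Fin.snoc_last] using this
        · simp [hl] at hj
    · intro h i hi
      induction i using Fin.lastCases with
      | last =>
        have he : e ∈ X' := by
          simp [hX', hi]
        have := h _ he
        simpa [Fin.snoc_last] using this
      | cast j =>
        have hj : j ∈ X' := by
          simp [hX', hi]
        have := h _ hj
        simpa [Fin.snoc_castSucc] using this
  · intro hE X
    obtain ⟨d, hd⟩ := hE (X.image Fin.castSucc)
    refine ⟨d, ?_⟩
    rw [parallelExt, Finset.filter_image,
      Finset.card_image_of_injective _ (snoc_injective e)] at hd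
    rw [← hd]
    congr 1
    apply Finset.filter_congr
    intro v _
    constructor
    · intro h i hi
      simp only [Finset.mem_image] at hi
      obtain ⟨j, hj, rfl⟩ := hi
      simpa [Fin.snoc_castSucc] using h j hj
    · intro h i hi
      have := h i.castSucc (Finset.mem_image_of_mem _ hi)
      simpa [Fin.snoc_castSucc] using this
end

section
/- Let m ≤ n and let S = {u₁, u₂, …, u_m} ⊆ 𝔽₂ⁿ be a permutative set of m vectors. Then the disjunctive closure ⟨S⟩∨ is a powerful set of cardinality 2^m. -/
/-- A family `u₁, …, u_m` of vectors in `𝔽₂ⁿ` is *permutative* if there exist `m` distinct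
positions `p₁, …, p_m` such that `u i` has entry `1` at position `p j` iff `i = j`, and `0`
otherwise. -/
def IsPermutative {m n : ℕ} (u : Fin m → (Fin n → ZMod 2)) : Prop :=
  ∃ p : Fin m → Fin n, Function.Injective p ∧
    ∀ i j : Fin m, u i (p j) = if i = j then 1 else 0

/-- The disjunctive closure `⟨S⟩∨` of `S = {u₁, …, u_m}`: all vectors
`a₁u₁ ∨ ⋯ ∨ a_mu_m` with `a_i ∈ {0,1}`, where `∨` is the positionwise maximum
(the empty disjunction being the zero vector). -/
def disjClosure {m n : ℕ} (u : Fin m → (Fin n → ZMod 2)) : Finset (Fin n → ZMod 2) :=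
  Finset.univ.image (fun a : Fin m → Bool =>
    (fun j => if ∃ i, a i = true ∧ u i j = 1 then (1 : ZMod 2) else 0))

lemma zmod2_eq_zero_of_ne_one {x : ZMod 2} (h : x ≠ 1) : x = 0 := by
  revert h; revert x; decide

/-- If `m ≤ n` and `S = {u₁, …, u_m}` is a permutative set of `m` (distinct) vectors,
then `⟨S⟩∨` is a powerful set of cardinality `2^m`. -/
theorem disjClosure_powerful {m n : ℕ} (hmn : m ≤ n) (u : Fin m → (Fin n → ZMod 2))
    (hu : Function.Injective u) (hperm : IsPermutative u) :
    IsPowerful (disjClosure u) ∧ (disjClosure u).card = 2 ^ m := by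
  obtain ⟨p, hp, hup⟩ := hperm
  set f : (Fin m → Bool) → (Fin n → ZMod 2) :=
    fun a => fun j => if ∃ i, a i = true ∧ u i j = 1 then (1 : ZMod 2) else 0 with hf
  have hdc : disjClosure u = Finset.univ.image f := rfl
  have hfp : ∀ (a : Fin m → Bool) (i : Fin m),
      f a (p i) = if a i = true then 1 else 0 := by
    intro a i
    simp only [hf]
    by_cases h : a i = true
    · rw [if_pos h, if_pos ⟨i, h, by rw [hup]; simp⟩]
    · rw [if_neg h, if_neg]
      rintro ⟨k, hk, hu1⟩
      rw [hup] at hu1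
      by_cases hk' : k = i
      · exact h (hk' ▸ hk)
      · simp [hk'] at hu1
  have hfinj : Function.Injective f := by
    intro a b hab
    funext i
    have h := congrFun hab (p i)
    rw [hfp, hfp] at h
    by_cases ha : a i = true <;> by_cases hb : b i = true <;>
      simp [ha, hb] at h ⊢ <;> simp_all
  constructor
  · intro X
    refine ⟨(Finset.univ.filter (fun i : Fin m => ∀ j ∈ X, u i j = 0)).card, ?_⟩
    have key : (disjClosure u).filter (fun v => ∀ i ∈ X, v i = 0)
        = (Finset.univ.filter (fun a => (∀ i ∈ X, f a i = 0))).image f := by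
      rw [hdc, Finset.filter_image]
    rw [key, Finset.card_image_of_injective _ hfinj]
    have hiff : ∀ a : Fin m → Bool,
        (∀ j ∈ X, f a j = 0) ↔ ∀ i, a i = true → i ∈ Finset.univ.filter
          (fun i : Fin m => ∀ j ∈ X, u i j = 0) := by
      intro a
      constructor
      · intro h i hi
        simp only [Finset.mem_filter, Finset.mem_univ, true_and]
        intro j hj
        have := h j hj
        simp only [hf] at this
        by_contra hne
        have h1 : u i j = 1 := by
          by_contra h1
          exact hne (zmod2_eq_zero_of_ne_one h1)
        rw [if_pos ⟨i, hi, h1⟩] at this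
        exact one_ne_zero this
      · intro h j hj
        simp only [hf]
        rw [if_neg]
        rintro ⟨i, hi, h1⟩
        have := h i hi
        simp only [Finset.mem_filter, Finset.mem_univ, true_and] at this
        rw [this j hj] at h1
        exact one_ne_zero h1.symm
    set T := Finset.univ.filter (fun i : Fin m => ∀ j ∈ X, u i j = 0) with hT
    have hcongr : Finset.univ.filter (fun a : Fin m → Bool => ∀ i ∈ X, f a i = 0)
        = Finset.univ.filter (fun a : Fin m → Bool => ∀ i, a i = true → i ∈ T) := by
      apply Finset.filter_congr
      intro a _
      simpa using hiff a
    rw [hcongr]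
    have := Fintype.card_subtype (fun a : Fin m → Bool => ∀ i, a i = true → i ∈ T)
    rw [← this]
    let e : {a : Fin m → Bool // ∀ i, a i = true → i ∈ T} ≃ ({i // i ∈ T} → Bool) :=
      { toFun := fun a i => a.1 i.1
        invFun := fun b => ⟨fun i => if h : i ∈ T then b ⟨i, h⟩ else false, by
          intro i hi
          by_contra hne
          dsimp only at hi
          rw [dif_neg hne] at hi
          exact Bool.false_ne_true hi⟩
        left_inv := by
          rintro ⟨a, ha⟩
          ext i
          simp only
          by_cases h : i ∈ T
          · rw [dif_pos h]
          · rw [dif_neg h]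
            cases hai : a i
            · rfl
            · exact absurd (ha i hai) h
        right_inv := by
          intro b
          ext i
          simp [i.2] }
    rw [Fintype.card_congr e]
    simp [Fintype.card_fun]
  · rw [hdc, Finset.card_image_of_injective _ hfinj]
    simp
end

section
/- Let Q ⊆ 𝔽₂^m and R ⊆ 𝔽₂ⁿ. The direct sum Q ⊕ R ⊆ 𝔽₂^{m+n} is powerful if and only if both Q and R are powerful. -/
/-- The direct sum `Q ⊕ R ⊆ 𝔽₂^{m+n}`: all concatenations `uv` with `u ∈ Q` and `v ∈ R`. -/
def directSum {m n : ℕ} (Q : Finset (Fin m → ZMod 2)) (R : Finset (Fin n → ZMod 2)) :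
    Finset (Fin (m + n) → ZMod 2) :=
  (Q ×ˢ R).image (fun p => Fin.append p.1 p.2)

lemma append_inj {m n : ℕ} :
    Function.Injective (fun p : (Fin m → ZMod 2) × (Fin n → ZMod 2) => Fin.append p.1 p.2) := by
  rintro ⟨u, v⟩ ⟨u', v'⟩ h
  simp only [Prod.mk.injEq]
  constructor
  · funext i
    have := congrFun h (Fin.castAdd n i)
    simpa [Fin.append_left] using this
  · funext j
    have := congrFun h (Fin.natAdd m j)
    simpa [Fin.append_right] using this

lemma castAdd_inj {m n : ℕ} : Function.Injective (Fin.castAdd n : Fin m → Fin (m + n)) :=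
  fun a b h => Fin.ext (by simpa using congrArg Fin.val h)

lemma natAdd_inj {m n : ℕ} : Function.Injective (Fin.natAdd m : Fin n → Fin (m + n)) :=
  fun a b h => Fin.ext (by simpa using congrArg Fin.val h)

lemma key_card {m n : ℕ} (Q : Finset (Fin m → ZMod 2)) (R : Finset (Fin n → ZMod 2))
    (X : Finset (Fin (m + n))) :
    ((directSum Q R).filter (fun v => ∀ i ∈ X, v i = 0)).card =
      (Q.filter (fun u => ∀ i ∈ X.preimage (Fin.castAdd n) castAdd_inj.injOn, u i = 0)).card *
      (R.filter (fun v => ∀ j ∈ X.preimage (Fin.natAdd m) natAdd_inj.injOn, v j = 0)).card := by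
  rw [directSum, Finset.filter_image, Finset.card_image_of_injective _ append_inj]
  rw [← Finset.card_product, ← Finset.filter_product]
  congr 1
  apply Finset.filter_congr
  rintro ⟨u, v⟩ -
  simp only [Function.comp, Finset.mem_preimage]
  constructor
  · intro h
    constructor
    · intro i hi
      have := h (Fin.castAdd n i) hi
      simpa [Fin.append_left] using this
    · intro j hj
      have := h (Fin.natAdd m j) hj
      simpa [Fin.append_right] using this
  · rintro ⟨h1, h2⟩ i
    induction i using Fin.addCases with
    | left i => exact fun hi => by simpa [Fin.append_left] using h1 i hi
    | right j => exact fun hj => by simpa [Fin.append_right] using h2 j hj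
  
lemma pow_factor {a b d : ℕ} (h : a * b = 2 ^ d) : ∃ k, a = 2 ^ k := by
  obtain ⟨k, _, hk⟩ := (Nat.dvd_prime_pow Nat.prime_two).mp ⟨b, h.symm⟩
  exact ⟨k, hk⟩

/-- `Q ⊕ R` is powerful if and only if both `Q` and `R` are powerful. -/
theorem directSum_powerful_iff {m n : ℕ} (Q : Finset (Fin m → ZMod 2))
    (R : Finset (Fin n → ZMod 2)) :
    IsPowerful (directSum Q R) ↔ IsPowerful Q ∧ IsPowerful R := by
  constructor
  · intro h
    constructor
    · intro X
      obtain ⟨d, hd⟩ := h (X.image (Fin.castAdd n))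
      rw [key_card] at hd
      have hXL : (X.image (Fin.castAdd n)).preimage (Fin.castAdd n) castAdd_inj.injOn = X := by
        ext i; simp [Finset.mem_preimage, castAdd_inj.eq_iff]
      rw [hXL] at hd
      exact pow_factor hd
    · intro X
      obtain ⟨d, hd⟩ := h (X.image (Fin.natAdd m))
      rw [key_card, Nat.mul_comm] at hd
      have hXR : (X.image (Fin.natAdd m)).preimage (Fin.natAdd m) natAdd_inj.injOn = X := by
        ext i; simp [Finset.mem_preimage, natAdd_inj.eq_iff]
      rw [hXR] at hd
      exact pow_factor hd
  · rintro ⟨hQ, hR⟩ X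
    obtain ⟨a, ha⟩ := hQ (X.preimage (Fin.castAdd n) castAdd_inj.injOn)
    obtain ⟨b, hb⟩ := hR (X.preimage (Fin.natAdd m) natAdd_inj.injOn)
    exact ⟨a + b, by rw [key_card, ha, hb, pow_add]⟩
end

section
/- Let Q ⊆ 𝔽₂^m and R ⊆ 𝔽₂ⁿ be powerful sets such that |Q| = |R|, the all-ones vector of length m is not in Q, and the all-ones vector of length n is not in R. Then the mutual framing Q#R ⊆ 𝔽₂^{m+n} is a powerful set. -/
/-- The mutual framing `Q#R ⊆ 𝔽₂^{m+n}`: the zero vector; `u1ₙ` for each nonzero `u ∈ Q`;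
`1ₘv` for each nonzero `v ∈ R`; and the all-ones vector. -/
def mutualFraming {m n : ℕ} (Q : Finset (Fin m → ZMod 2)) (R : Finset (Fin n → ZMod 2)) :
    Finset (Fin (m + n) → ZMod 2) :=
  insert 0 (insert (fun _ => 1)
    (((Q.filter (fun u => u ≠ 0)).image (fun u => Fin.append u (fun _ => 1))) ∪
     ((R.filter (fun v => v ≠ 0)).image (fun v => Fin.append (fun _ => (1 : ZMod 2)) v))))

lemma zero_mem_of_isPowerful {k : ℕ} {S : Finset (Fin k → ZMod 2)} (h : IsPowerful S) :
    (0 : Fin k → ZMod 2) ∈ S := by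
  obtain ⟨d, hd⟩ := h Finset.univ
  by_contra h0
  have he : S.filter (fun v => ∀ i ∈ Finset.univ, v i = 0) = ∅ := by
    apply Finset.filter_eq_empty_iff.mpr
    intro v hv hall
    have : v = 0 := funext fun i => hall i (Finset.mem_univ i)
    exact h0 (this ▸ hv)
  rw [he, Finset.card_empty] at hd
  exact absurd hd.symm (Nat.two_pow_pos d).ne'

/-- If `Q` and `R` are powerful, `|Q| = |R|`, and neither contains the all-ones vector,
then the mutual framing `Q#R` is powerful. -/
theorem mutualFraming_powerful {m n : ℕ} (Q : Finset (Fin m → ZMod 2))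
    (R : Finset (Fin n → ZMod 2)) (hQ : IsPowerful Q) (hR : IsPowerful R)
    (hcard : Q.card = R.card)
    (hQ1 : (fun _ => (1 : ZMod 2)) ∉ Q) (hR1 : (fun _ => (1 : ZMod 2)) ∉ R) :
    IsPowerful (mutualFraming Q R) := by
  classical
  have hQ0 : (0 : Fin m → ZMod 2) ∈ Q := zero_mem_of_isPowerful hQ
  have hR0 : (0 : Fin n → ZMod 2) ∈ R := zero_mem_of_isPowerful hR
  have hm : 0 < m := by
    rcases Nat.eq_zero_or_pos m with rfl | h
    · exact absurd hQ0 (by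
        have h1 : (fun _ => (1 : ZMod 2)) = (0 : Fin 0 → ZMod 2) := funext fun i => i.elim0
        rw [← h1]; exact hQ1)
    · exact h
  have hn : 0 < n := by
    rcases Nat.eq_zero_or_pos n with rfl | h
    · exact absurd hR0 (by
        have h1 : (fun _ => (1 : ZMod 2)) = (0 : Fin 0 → ZMod 2) := funext fun i => i.elim0
        rw [← h1]; exact hR1)
    · exact h
  have injR : Function.Injective (fun u : Fin m → ZMod 2 => Fin.append u (fun _ : Fin n => (1 : ZMod 2))) := by
    intro u u' h
    funext i
    have := congrFun h (Fin.castAdd n i)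
    simpa [Fin.append_left] using this
  have injL : Function.Injective (fun v : Fin n → ZMod 2 => Fin.append (fun _ : Fin m => (1 : ZMod 2)) v) := by
    intro v v' h
    funext j
    have := congrFun h (Fin.natAdd m j)
    simpa [Fin.append_right] using this
  have hA0 : ∀ u : Fin m → ZMod 2, Fin.append u (fun _ : Fin n => (1 : ZMod 2)) ≠ 0 := by
    intro u h
    have := congrFun h (Fin.natAdd m ⟨0, hn⟩)
    rw [Fin.append_right] at this
    exact one_ne_zero this
  have hB0 : ∀ v : Fin n → ZMod 2, Fin.append (fun _ : Fin m => (1 : ZMod 2)) v ≠ 0 := by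
    intro v h
    have := congrFun h (Fin.castAdd n ⟨0, hm⟩)
    rw [Fin.append_left] at this
    exact one_ne_zero this
  have hAones : ∀ u ∈ Q, Fin.append u (fun _ : Fin n => (1 : ZMod 2)) ≠ (fun _ => 1) := by
    intro u hu h
    apply hQ1
    have h2 : u = fun _ => 1 := funext fun i => by
      have := congrFun h (Fin.castAdd n i); rwa [Fin.append_left] at this
    rwa [h2] at hu
  have hBones : ∀ v ∈ R, Fin.append (fun _ : Fin m => (1 : ZMod 2)) v ≠ (fun _ => 1) := by
    intro v hv h
    apply hR1
    have h2 : v = fun _ => 1 := funext fun j => by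
      have := congrFun h (Fin.natAdd m j); rwa [Fin.append_right] at this
    rwa [h2] at hv
  have hAB : ∀ u ∈ Q, ∀ v : Fin n → ZMod 2,
      Fin.append u (fun _ : Fin n => (1 : ZMod 2)) ≠ Fin.append (fun _ : Fin m => (1 : ZMod 2)) v := by
    intro u hu v h
    apply hQ1
    have h2 : u = fun _ => 1 := funext fun i => by
      have := congrFun h (Fin.castAdd n i); rwa [Fin.append_left, Fin.append_left] at this
    rwa [h2] at hu
  intro X
  by_cases hXe : X = ∅
  · -- X empty: count everything
    obtain ⟨a, ha⟩ := hQ ∅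
    rw [Finset.filter_true_of_mem (fun v _ => by simp)] at ha
    have hb : R.card = 2 ^ a := hcard ▸ ha
    refine ⟨a + 1, ?_⟩
    rw [hXe, Finset.filter_true_of_mem (fun v _ => by simp)]
    rw [mutualFraming]
    have h0ni : (0 : Fin (m + n) → ZMod 2) ∉ insert (fun _ => (1 : ZMod 2))
        (((Q.filter (fun u => u ≠ 0)).image (fun u => Fin.append u (fun _ : Fin n => (1 : ZMod 2)))) ∪
         ((R.filter (fun v => v ≠ 0)).image (fun v => Fin.append (fun _ : Fin m => (1 : ZMod 2)) v))) := by
      simp only [Finset.mem_insert, Finset.mem_union, Finset.mem_image, Finset.mem_filter]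
      push_neg
      refine ⟨?_, ?_, ?_⟩
      · intro h
        have := congrFun h (Fin.castAdd n ⟨0, hm⟩)
        exact one_ne_zero this.symm
      · intro u _ h
        exact hA0 u h
      · intro v _ h
        exact hB0 v h
    have h1ni : (fun _ => (1 : ZMod 2)) ∉
        (((Q.filter (fun u => u ≠ 0)).image (fun u => Fin.append u (fun _ : Fin n => (1 : ZMod 2)))) ∪
         ((R.filter (fun v => v ≠ 0)).image (fun v => Fin.append (fun _ : Fin m => (1 : ZMod 2)) v))) := by
      simp only [Finset.mem_union, Finset.mem_image, Finset.mem_filter]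
      push_neg
      constructor
      · intro u hu
        exact hAones u hu.1
      · intro v hv
        exact hBones v hv.1
    have hdisj : Disjoint
        ((Q.filter (fun u => u ≠ 0)).image (fun u => Fin.append u (fun _ : Fin n => (1 : ZMod 2))))
        ((R.filter (fun v => v ≠ 0)).image (fun v => Fin.append (fun _ : Fin m => (1 : ZMod 2)) v)) := by
      rw [Finset.disjoint_left]
      intro x hx hx'
      obtain ⟨u, hu, rfl⟩ := Finset.mem_image.mp hx
      obtain ⟨v, hv, hveq⟩ := Finset.mem_image.mp hx'
      exact hAB u (Finset.mem_filter.mp hu).1 v hveq.symm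
    rw [Finset.card_insert_of_notMem h0ni, Finset.card_insert_of_notMem h1ni,
        Finset.card_union_of_disjoint hdisj,
        Finset.card_image_of_injective _ injR, Finset.card_image_of_injective _ injL,
        Finset.filter_ne', Finset.filter_ne',
        Finset.card_erase_of_mem hQ0, Finset.card_erase_of_mem hR0]
    have hp : (2 : ℕ) ^ (a + 1) = 2 ^ a * 2 := pow_succ 2 a
    have hpos : 0 < 2 ^ a := Nat.two_pow_pos a
    omega
  · -- X nonempty
    obtain ⟨i0, hi0⟩ := Finset.nonempty_iff_ne_empty.mpr hXe
    have hPones : ¬ (∀ i ∈ X, (fun _ => (1 : ZMod 2)) i = 0) := by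
      intro h; exact one_ne_zero (h i0 hi0)
    have hP0 : ∀ i ∈ X, (0 : Fin (m + n) → ZMod 2) i = 0 := fun i _ => rfl
    have hor : (∃ i : Fin m, Fin.castAdd n i ∈ X) ∨ (∃ j : Fin n, Fin.natAdd m j ∈ X) := by
      refine Fin.addCases
        (motive := fun i => i ∈ X →
          (∃ i : Fin m, Fin.castAdd n i ∈ X) ∨ (∃ j : Fin n, Fin.natAdd m j ∈ X))
        (fun i hi => Or.inl ⟨i, hi⟩) (fun j hj => Or.inr ⟨j, hj⟩) i0 hi0
    have hAe : (∃ j : Fin n, Fin.natAdd m j ∈ X) →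
        ((Q.filter (fun u => u ≠ 0)).image
          (fun u => Fin.append u (fun _ : Fin n => (1 : ZMod 2)))).filter
            (fun v => ∀ i ∈ X, v i = 0) = ∅ := by
      rintro ⟨j, hj⟩
      apply Finset.filter_eq_empty_iff.mpr
      intro x hx hall
      obtain ⟨u, -, rfl⟩ := Finset.mem_image.mp hx
      have := hall _ hj
      rw [Fin.append_right] at this
      exact one_ne_zero this
    have hBe : (∃ i : Fin m, Fin.castAdd n i ∈ X) →
        ((R.filter (fun v => v ≠ 0)).image
          (fun v => Fin.append (fun _ : Fin m => (1 : ZMod 2)) v)).filter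
            (fun v => ∀ i ∈ X, v i = 0) = ∅ := by
      rintro ⟨i, hi⟩
      apply Finset.filter_eq_empty_iff.mpr
      intro x hx hall
      obtain ⟨v, -, rfl⟩ := Finset.mem_image.mp hx
      have := hall _ hi
      rw [Fin.append_left] at this
      exact one_ne_zero this
    rw [mutualFraming, Finset.filter_insert, if_pos hP0, Finset.filter_insert,
        if_neg hPones, Finset.filter_union]
    by_cases hXR : ∃ j : Fin n, Fin.natAdd m j ∈ X
    · by_cases hXL : ∃ i : Fin m, Fin.castAdd n i ∈ X
      · -- both sides touched : only 0 survives
        rw [hAe hXR, hBe hXL]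
        exact ⟨0, by simp⟩
      · -- only right side touched
        obtain ⟨d, hd⟩ := hR (Finset.univ.filter (fun j : Fin n => Fin.natAdd m j ∈ X))
        refine ⟨d, ?_⟩
        rw [hAe hXR, Finset.empty_union, Finset.filter_image]
        have hBfilter : (R.filter (fun v => v ≠ 0)).filter
            (fun v => ∀ i ∈ X, Fin.append (fun _ : Fin m => (1 : ZMod 2)) v i = 0)
            = (R.filter (fun v => ∀ j ∈ Finset.univ.filter
                (fun j : Fin n => Fin.natAdd m j ∈ X), v j = 0)).erase 0 := by
          rw [Finset.filter_filter, ← Finset.filter_ne', Finset.filter_filter]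
          apply Finset.filter_congr
          intro v hv
          simp only [Finset.mem_filter, Finset.mem_univ, true_and]
          constructor
          · rintro ⟨hv0, hall⟩
            refine ⟨fun j hj => ?_, hv0⟩
            have := hall _ hj
            rwa [Fin.append_right] at this
          · rintro ⟨hall, hv0⟩
            refine ⟨hv0, ?_⟩
            refine Fin.addCases (motive := fun i => i ∈ X →
                Fin.append (fun _ : Fin m => (1 : ZMod 2)) v i = 0) ?_ ?_
            · intro i hi
              exact absurd ⟨i, hi⟩ hXL
            · intro j hj
              rw [Fin.append_right]
              exact hall j hj
        rw [hBfilter]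
        have h0img : (0 : Fin (m + n) → ZMod 2) ∉
            ((R.filter (fun v => ∀ j ∈ Finset.univ.filter
              (fun j : Fin n => Fin.natAdd m j ∈ X), v j = 0)).erase 0).image
              (fun v => Fin.append (fun _ : Fin m => (1 : ZMod 2)) v) := by
          simp only [Finset.mem_image, not_exists]
          rintro v ⟨-, h⟩
          exact hB0 v h
        have hmem0 : (0 : Fin n → ZMod 2) ∈ R.filter (fun v => ∀ j ∈ Finset.univ.filter
            (fun j : Fin n => Fin.natAdd m j ∈ X), v j = 0) :=
          Finset.mem_filter.mpr ⟨hR0, fun j _ => rfl⟩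
        rw [Finset.card_insert_of_notMem h0img,
          Finset.card_image_of_injective _ injL,
          Finset.card_erase_of_mem hmem0, hd]
        exact Nat.succ_pred_eq_of_pos (Nat.two_pow_pos d)
    · -- only left side touched
      have hXL : ∃ i : Fin m, Fin.castAdd n i ∈ X := hor.resolve_right hXR
      obtain ⟨d, hd⟩ := hQ (Finset.univ.filter (fun i : Fin m => Fin.castAdd n i ∈ X))
      refine ⟨d, ?_⟩
      rw [hBe hXL, Finset.union_empty, Finset.filter_image]
      have hAfilter : (Q.filter (fun u => u ≠ 0)).filter
          (fun u => ∀ i ∈ X, Fin.append u (fun _ : Fin n => (1 : ZMod 2)) i = 0)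
          = (Q.filter (fun u => ∀ i ∈ Finset.univ.filter
              (fun i : Fin m => Fin.castAdd n i ∈ X), u i = 0)).erase 0 := by
        rw [Finset.filter_filter, ← Finset.filter_ne', Finset.filter_filter]
        apply Finset.filter_congr
        intro u hu
        simp only [Finset.mem_filter, Finset.mem_univ, true_and]
        constructor
        · rintro ⟨hu0, hall⟩
          refine ⟨fun i hi => ?_, hu0⟩
          have := hall _ hi
          rwa [Fin.append_left] at this
        · rintro ⟨hall, hu0⟩
          refine ⟨hu0, ?_⟩
          refine Fin.addCases (motive := fun i => i ∈ X →
              Fin.append u (fun _ : Fin n => (1 : ZMod 2)) i = 0) ?_ ?_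
          · intro i hi
            rw [Fin.append_left]
            exact hall i hi
          · intro j hj
            exact absurd ⟨j, hj⟩ hXR
      rw [hAfilter]
      have h0img : (0 : Fin (m + n) → ZMod 2) ∉
          ((Q.filter (fun u => ∀ i ∈ Finset.univ.filter
            (fun i : Fin m => Fin.castAdd n i ∈ X), u i = 0)).erase 0).image
            (fun u => Fin.append u (fun _ : Fin n => (1 : ZMod 2))) := by
        simp only [Finset.mem_image, not_exists]
        rintro u ⟨-, h⟩
        exact hA0 u h
      have hmem0 : (0 : Fin m → ZMod 2) ∈ Q.filter (fun u => ∀ i ∈ Finset.univ.filter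
          (fun i : Fin m => Fin.castAdd n i ∈ X), u i = 0) :=
        Finset.mem_filter.mpr ⟨hQ0, fun i _ => rfl⟩
      rw [Finset.card_insert_of_notMem h0img,
        Finset.card_image_of_injective _ injR,
        Finset.card_erase_of_mem hmem0, hd]
      exact Nat.succ_pred_eq_of_pos (Nat.two_pow_pos d)
end

section
/- Let m, n ≥ 1 and let Q ⊆ 𝔽₂^m and R ⊆ 𝔽₂ⁿ be powerful sets such that the mutual framing Q#R is powerful. If it is not the case that both Q and R consist only of the zero vector and possibly the all-ones vector, then Q#R is not a linear subspace of 𝔽₂^{m+n}. -/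
lemma zmod2_eq_one_of_add_one (x : ZMod 2) (h : x + 1 = 0) : x = 1 := by revert x; decide
lemma zmod2_eq_zero_of_add_one (x : ZMod 2) (h : x + 1 = 1) : x = 0 := by revert x; decide

/-- If `Q` and `R` are powerful, `Q#R` is powerful, and it is not the case that both `Q`
and `R` consist only of the zero vector and possibly the all-ones vector, then `Q#R` is
not linear. -/
theorem mutualFraming_nonlinear {m n : ℕ} (hm : 1 ≤ m) (hn : 1 ≤ n)
    (Q : Finset (Fin m → ZMod 2)) (R : Finset (Fin n → ZMod 2))
    (hQ : IsPowerful Q) (hR : IsPowerful R) (hQR : IsPowerful (mutualFraming Q R))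
    (hnotriv : ¬ (Q ⊆ {0, fun _ => 1} ∧ R ⊆ {0, fun _ => 1})) :
    ¬ IsLinear (mutualFraming Q R) := by
  rintro ⟨W, hW⟩
  have hmem : ∀ x, x ∈ mutualFraming Q R ↔ x ∈ W := by
    intro x
    constructor
    · intro h
      have : x ∈ (mutualFraming Q R : Set _) := h
      rw [hW] at this; exact this
    · intro h
      have : x ∈ (W : Set _) := h
      rw [← hW] at this; exact this
  have hones : (fun _ => (1:ZMod 2)) ∈ mutualFraming Q R :=
    Finset.mem_insert_of_mem (Finset.mem_insert_self _ _)
  rcases not_and_or.mp hnotriv with h | h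
  · -- nontrivial element of Q
    obtain ⟨u, huQ, hu⟩ := Finset.not_subset.mp h
    simp only [Finset.mem_insert, Finset.mem_singleton, not_or] at hu
    obtain ⟨hu0, hu1⟩ := hu
    have h1 : Fin.append u (fun _ => (1:ZMod 2)) ∈ mutualFraming Q R := by
      refine Finset.mem_insert_of_mem (Finset.mem_insert_of_mem ?_)
      exact Finset.mem_union_left _
        (Finset.mem_image_of_mem _ (Finset.mem_filter.mpr ⟨huQ, hu0⟩))
    set w : Fin (m+n) → ZMod 2 := Fin.append u (fun _ => (1:ZMod 2)) + (fun _ => 1) with hwdef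
    have hwW : w ∈ mutualFraming Q R :=
      (hmem w).mpr (W.add_mem ((hmem _).mp h1) ((hmem _).mp hones))
    have hwnat : ∀ j : Fin n, w (Fin.natAdd m j) = 0 := by
      intro j; simp [hwdef, Fin.append_right]; decide
    have hwcast : ∀ i : Fin m, w (Fin.castAdd n i) = u i + 1 := by
      intro i; simp [hwdef, Fin.append_left]
    have jn : Fin n := ⟨0, hn⟩
    rcases Finset.mem_insert.mp hwW with h0 | hwW
    · obtain ⟨i, hi⟩ := Function.ne_iff.mp hu1
      have hc := hwcast i
      rw [h0] at hc
      simp only [Pi.zero_apply] at hc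
      exact hi (zmod2_eq_one_of_add_one _ hc.symm)
    rcases Finset.mem_insert.mp hwW with h0 | hwW
    · have hc := hwnat jn
      rw [h0] at hc
      simp at hc
    rcases Finset.mem_union.mp hwW with hA | hB
    · obtain ⟨a, _, ha⟩ := Finset.mem_image.mp hA
      have hc := hwnat jn
      rw [← ha] at hc
      simp [Fin.append_right] at hc
    · obtain ⟨b, _, hb⟩ := Finset.mem_image.mp hB
      obtain ⟨i, hi⟩ := Function.ne_iff.mp hu0
      have hc := hwcast i
      rw [← hb, Fin.append_left] at hc
      simp only [Pi.zero_apply] at hi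
      exact hi (zmod2_eq_zero_of_add_one _ hc.symm)
  · -- nontrivial element of R
    obtain ⟨v, hvR, hv⟩ := Finset.not_subset.mp h
    simp only [Finset.mem_insert, Finset.mem_singleton, not_or] at hv
    obtain ⟨hv0, hv1⟩ := hv
    have h1 : Fin.append (fun _ => (1:ZMod 2)) v ∈ mutualFraming Q R := by
      refine Finset.mem_insert_of_mem (Finset.mem_insert_of_mem ?_)
      exact Finset.mem_union_right _
        (Finset.mem_image_of_mem _ (Finset.mem_filter.mpr ⟨hvR, hv0⟩))
    set w : Fin (m+n) → ZMod 2 := Fin.append (fun _ => (1:ZMod 2)) v + (fun _ => 1) with hwdef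
    have hwW : w ∈ mutualFraming Q R :=
      (hmem w).mpr (W.add_mem ((hmem _).mp h1) ((hmem _).mp hones))
    have hwcast : ∀ i : Fin m, w (Fin.castAdd n i) = 0 := by
      intro i; simp [hwdef, Fin.append_left]; decide
    have hwnat : ∀ j : Fin n, w (Fin.natAdd m j) = v j + 1 := by
      intro j; simp [hwdef, Fin.append_right]
    have im : Fin m := ⟨0, hm⟩
    rcases Finset.mem_insert.mp hwW with h0 | hwW
    · obtain ⟨j, hj⟩ := Function.ne_iff.mp hv1
      have hc := hwnat j
      rw [h0] at hc
      simp only [Pi.zero_apply] at hc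
      exact hj (zmod2_eq_one_of_add_one _ hc.symm)
    rcases Finset.mem_insert.mp hwW with h0 | hwW
    · have hc := hwcast im
      rw [h0] at hc
      simp at hc
    rcases Finset.mem_union.mp hwW with hA | hB
    · obtain ⟨a, haQ, ha⟩ := Finset.mem_image.mp hA
      have ha0' : a ≠ 0 := (Finset.mem_filter.mp haQ).2
      obtain ⟨i, hi⟩ := Function.ne_iff.mp ha0'
      have hc := hwcast i
      rw [← ha, Fin.append_left] at hc
      simp only [Pi.zero_apply] at hi
      exact hi hc
    · obtain ⟨b, _, hb⟩ := Finset.mem_image.mp hB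
      obtain ⟨j, hj⟩ := Function.ne_iff.mp hv0
      have hc := hwnat j
      have hc := hwcast ⟨0, hm⟩
      rw [← hb, Fin.append_left] at hc
      simp at hc
end

section
/- Every powerful set is determined by its minimal nonempty members: if S and S' are powerful subsets of 2^E (for the same finite ground set E) with S_min = S'_min, then S = S'. -/
def IsPowerfulSet {E : Type*} [Fintype E] [DecidableEq E] (S : Finset (Finset E)) : Prop :=
  ∀ X : Finset E, ∃ d : ℕ, (S.filter (fun Y => Y ∩ X = ∅)).card = 2 ^ d

def minMembers {E : Type*} [DecidableEq E] (S : Finset (Finset E)) : Finset (Finset E) :=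
  S.filter (fun Y => Y ≠ ∅ ∧ ∀ Z ∈ S, Z ≠ ∅ → Z ⊆ Y → Z = Y)

lemma inter_compl_empty_iff {E : Type*} [Fintype E] [DecidableEq E] (Y A : Finset E) :
    Y ∩ Aᶜ = ∅ ↔ Y ⊆ A := by
  simp only [Finset.eq_empty_iff_forall_notMem, Finset.mem_inter, Finset.mem_compl,
    Finset.subset_iff]
  constructor
  · intro h x hx
    by_contra hna
    exact h x ⟨hx, hna⟩
  · intro h x hx
    exact hx.2 (h hx.1)

lemma powerful_subset_count {E : Type*} [Fintype E] [DecidableEq E]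
    {S : Finset (Finset E)} (hS : IsPowerfulSet S) (A : Finset E) :
    ∃ d : ℕ, (S.filter (fun Y => Y ⊆ A)).card = 2 ^ d := by
  obtain ⟨d, hd⟩ := hS Aᶜ
  refine ⟨d, ?_⟩
  rw [← hd]
  congr 1
  apply Finset.filter_congr
  intro Y _
  simp [inter_compl_empty_iff]

lemma minMembers_subset {E : Type*} [DecidableEq E] (S : Finset (Finset E)) :
    minMembers S ⊆ S := Finset.filter_subset _ _

lemma empty_mem_of_powerful {E : Type*} [Fintype E] [DecidableEq E]
    {S : Finset (Finset E)} (hS : IsPowerfulSet S) : (∅ : Finset E) ∈ S := by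
  obtain ⟨d, hd⟩ := hS Finset.univ
  have hpos : 0 < (S.filter (fun Y => Y ∩ Finset.univ = ∅)).card := by
    rw [hd]; exact pow_pos (by norm_num) d
  obtain ⟨Y, hY⟩ := Finset.card_pos.mp hpos
  simp only [Finset.mem_filter, Finset.inter_univ] at hY
  rw [← hY.2]; exact hY.1

lemma powerful_step {E : Type*} [Fintype E] [DecidableEq E]
    (S S' : Finset (Finset E)) (hS : IsPowerfulSet S) (hS' : IsPowerfulSet S')
    (hmin : minMembers S ⊆ S') (A : Finset E)
    (ih : ∀ B ⊂ A, (B ∈ S ↔ B ∈ S')) (hA : A ∈ S) : A ∈ S' := by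
  by_contra hA'
  have hAne : A ≠ ∅ := by
    rintro rfl; exact hA' (empty_mem_of_powerful hS')
  set T := S.filter (fun Y => Y ⊆ A) with hT
  set T' := S'.filter (fun Y => Y ⊆ A) with hT'
  have herase : T.erase A = T'.erase A := by
    ext B
    simp only [Finset.mem_erase, Finset.mem_filter, hT, hT']
    constructor
    · rintro ⟨hBA, hBS, hBsub⟩
      exact ⟨hBA, (ih B (ssubset_of_subset_of_ne hBsub hBA)).mp hBS, hBsub⟩
    · rintro ⟨hBA, hBS, hBsub⟩
      exact ⟨hBA, (ih B (ssubset_of_subset_of_ne hBsub hBA)).mpr hBS, hBsub⟩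
  have hAT : A ∈ T := by simp [hT, hA]
  have hAT' : A ∉ T' := by simp [hT', hA']
  have hcard : T.card = T'.card + 1 := by
    rw [← Finset.card_erase_add_one hAT, herase, Finset.erase_eq_of_notMem hAT']
  obtain ⟨d, hd⟩ := powerful_subset_count hS A
  obtain ⟨e, he⟩ := powerful_subset_count hS' A
  rw [← hT] at hd
  rw [← hT'] at he
  -- 2^d = 2^e + 1 forces d = 1, e = 0
  have hT2 : T.card = 2 := by
    rcases Nat.eq_zero_or_pos d with rfl | hd1
    · rw [pow_zero] at hd
      rw [hd, he] at hcard
      have := pow_pos (show 0 < 2 by norm_num) e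
      omega
    · have heven : 2 ∣ T.card := by
        rw [hd]; exact dvd_pow_self 2 hd1.ne'
      have : ¬ (2 ∣ T'.card + 1) → False := fun h => h (hcard ▸ heven)
      have he0 : e = 0 := by
        by_contra he1
        have : 2 ∣ T'.card := by
          rw [he]; exact dvd_pow_self 2 he1
        omega
      rw [he0, pow_zero] at he
      omega
  -- T = {∅, A}
  have hsub : ({∅, A} : Finset (Finset E)) ⊆ T := by
    intro Y hY
    simp only [Finset.mem_insert, Finset.mem_singleton] at hY
    rcases hY with rfl | rfl
    · simp [hT, empty_mem_of_powerful hS]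
    · exact hAT
  have hpair : ({∅, A} : Finset (Finset E)).card = 2 := by
    rw [Finset.card_insert_of_notMem (by simpa using hAne.symm), Finset.card_singleton]
  have hTeq : T = {∅, A} :=
    (Finset.eq_of_subset_of_card_le hsub (by rw [hT2, hpair])).symm
  have hAmin : A ∈ minMembers S := by
    simp only [minMembers, Finset.mem_filter]
    refine ⟨hA, hAne, fun Z hZ hZne hZA => ?_⟩
    have : Z ∈ T := by simp [hT, hZ, hZA]
    rw [hTeq] at this
    simp only [Finset.mem_insert, Finset.mem_singleton] at this
    rcases this with rfl | rfl
    · exact absurd rfl hZne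
    · rfl
  exact hA' (hmin hAmin)

/-- Every powerful set is determined by its minimal nonempty members. -/
theorem powerful_determined_by_minMembers {E : Type*} [Fintype E] [DecidableEq E]
    (S S' : Finset (Finset E)) (hS : IsPowerfulSet S) (hS' : IsPowerfulSet S')
    (hmin : minMembers S = minMembers S') : S = S' := by
  have key : ∀ A : Finset E, A ∈ S ↔ A ∈ S' := by
    intro A
    induction A using Finset.strongInduction with
    | _ A ih =>
      constructor
      · exact powerful_step S S' hS hS'
          (fun Y hY => minMembers_subset S' (hmin ▸ hY)) A (fun B hB => ih B hB)
      · exact powerful_step S' S hS' hS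
          (fun Y hY => minMembers_subset S (hmin.symm ▸ hY)) A (fun B hB => (ih B hB).symm)
  ext A; exact key A
end
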